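/- In the q-shuffle algebra V, for all n ≥ 1: Σ_{k=0}^{n} q^{n−2k} G_k ⋆ G̃_{n−k} = q Σ_{k=0}^{n−1} q^{n−1−2k} W_{−k} ⋆ W_{n−k}, and this common value equals [2]_q^{n−1} (xy+yx)^{n−1}(q·xy + q⁻¹·yx), where powers and products on the right are in the free (concatenation) algebra. -/

import Mathlib

noncomputable section

/-- Words in the letters `x` (= `false`) and `y` (= `true`). -/
abbrev Wd := List Bool

/-- The underlying vector space of the free algebra `F⟨x,y⟩`,
with the words as a basis. -/
abbrev V (F : Type*) [Field F] := Wd →₀ F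

/-- The pairing `⟨u,v⟩` on letters: `2` if equal, `-2` if distinct. -/
def pr (a b : Bool) : ℤ := if a = b then 2 else -2

/-- `⟨u₁,b⟩ + ⟨u₂,b⟩ + ⋯ + ⟨u_r,b⟩` for a word `u` and a letter `b`. -/
def wsum (u : Wd) (b : Bool) : ℤ := (u.map fun a => pr a b).sum

variable {F : Type*} [Field F]

/-- Left multiplication by a letter, in the free (concatenation) algebra. -/
def lmul (a : Bool) (f : V F) : V F := Finsupp.mapDomain (fun w => a :: w) f

/-- The `q`-shuffle product of two words (as an element of `V F`), defined by
Rosso's recursion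
`u ⋆ v = u₁((u₂⋯u_r) ⋆ v) + q^{⟨u₁,v₁⟩+⋯+⟨u_r,v₁⟩} v₁(u ⋆ (v₂⋯v_s))`. -/
def sh (q : F) : Wd → Wd → V F
  | [], v => Finsupp.single v 1
  | u@(_ :: _), [] => Finsupp.single u 1
  | a :: u', b :: v' =>
      lmul a (sh q u' (b :: v')) +
        q ^ wsum (a :: u') b • lmul b (sh q (a :: u') v')
  termination_by u v => u.length + v.length
  decreasing_by all_goals (simp only [List.length_cons]; omega)

/-- The `q`-shuffle product on `V F`, extended bilinearly from words. -/
def st (q : F) (f g : V F) : V F :=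
  f.sum fun u cu => g.sum fun v cv => (cu * cv) • sh q u v

/-- The concatenation (free-algebra) product on `V F`. -/
def cm (f g : V F) : V F :=
  f.sum fun u cu => g.sum fun v cv => Finsupp.single (u ++ v) (cu * cv)

/-- Powers with respect to the concatenation product. -/
def cpow (f : V F) : ℕ → V F
  | 0 => Finsupp.single [] 1
  | n + 1 => cm f (cpow f n)

/-- The alternating word `W_{-k} = xyx⋯x` of length `2k+1`. -/
def altX : ℕ → Wd
  | 0 => [false]
  | k + 1 => false :: true :: altX k

/-- The alternating word `W_{k+1} = yxy⋯y` of length `2k+1`. -/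
def altY : ℕ → Wd
  | 0 => [true]
  | k + 1 => true :: false :: altY k

/-- The alternating word `G_k = (yx)^k`. -/
def gw : ℕ → Wd
  | 0 => []
  | k + 1 => true :: false :: gw k

/-- The alternating word `G̃_k = (xy)^k`. -/
def gtw : ℕ → Wd
  | 0 => []
  | k + 1 => false :: true :: gtw k

/-- `W_{-k}` as an element of `V F`. -/
def Wm (F : Type*) [Field F] (k : ℕ) : V F := Finsupp.single (altX k) 1

/-- `W_{k+1}` as an element of `V F`. -/
def Wp (F : Type*) [Field F] (k : ℕ) : V F := Finsupp.single (altY k) 1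

/-- `G_k` as an element of `V F`. -/
def Gn (F : Type*) [Field F] (k : ℕ) : V F := Finsupp.single (gw k) 1

/-- `G̃_k` as an element of `V F`. -/
def Gt (F : Type*) [Field F] (k : ℕ) : V F := Finsupp.single (gtw k) 1

section aux
variable {F : Type*} [Field F] (q : F)

lemma sh_nil_left (v : Wd) : sh q [] v = Finsupp.single v 1 := by rw [sh]

lemma sh_cons_nil (a : Bool) (u : Wd) : sh q (a :: u) [] = Finsupp.single (a :: u) 1 := by rw [sh]

lemma sh_cons_cons (a b : Bool) (u v : Wd) :
    sh q (a :: u) (b :: v) = lmul a (sh q u (b :: v)) +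
      q ^ wsum (a :: u) b • lmul b (sh q (a :: u) v) := by rw [sh]

lemma wsum_cons (a : Bool) (u : Wd) (b : Bool) : wsum (a :: u) b = pr a b + wsum u b := by
  simp [wsum]

lemma altX_eq (k : ℕ) : altX k = false :: gw k := by
  induction k with
  | zero => rfl
  | succ k ih => simp [altX, gw, ih]

lemma altY_eq (k : ℕ) : altY k = true :: gtw k := by
  induction k with
  | zero => rfl
  | succ k ih => simp [altY, gtw, ih]

lemma wsum_gw (k : ℕ) (b : Bool) : wsum (gw k) b = 0 := by
  induction k with
  | zero => simp [wsum, gw]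
  | succ k ih => rw [gw, wsum_cons, wsum_cons, ih]; cases b <;> simp [pr]

lemma wsum_altX (k : ℕ) (b : Bool) : wsum (altX k) b = pr false b := by
  rw [altX_eq, wsum_cons, wsum_gw]; ring

lemma sh_nil_right (w : Wd) : sh q w [] = Finsupp.single w 1 := by
  cases w with
  | nil => rw [sh]
  | cons a u => rw [sh]

lemma lmul_apply_hom (a : Bool) (f : V F) :
    lmul a f = Finsupp.mapDomain.addMonoidHom (fun w => a :: w) f := rfl

lemma lmul_add (a : Bool) (f g : V F) : lmul a (f + g) = lmul a f + lmul a g :=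
  Finsupp.mapDomain_add

lemma lmul_smul (a : Bool) (c : F) (f : V F) : lmul a (c • f) = c • lmul a f :=
  Finsupp.mapDomain_smul c f

lemma lmul_sum {ι : Type*} (a : Bool) (s : Finset ι) (f : ι → V F) :
    lmul a (∑ i ∈ s, f i) = ∑ i ∈ s, lmul a (f i) := by
  simp only [lmul_apply_hom, map_sum]

lemma lmul_single (a : Bool) (w : Wd) (c : F) :
    lmul a (Finsupp.single w c) = Finsupp.single (a :: w) c :=
  Finsupp.mapDomain_single

lemma st_single_single (u v : Wd) :
    st q (Finsupp.single u (1:F)) (Finsupp.single v (1:F)) = sh q u v := by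
  rw [st, Finsupp.sum_single_index, Finsupp.sum_single_index]
  · simp
  · simp
  · simp [Finsupp.sum_single_index]

lemma cm_single_one (u : Wd) (g : V F) :
    cm (Finsupp.single u (1:F)) g = Finsupp.mapDomain (fun w => u ++ w) g := by
  rw [cm, Finsupp.sum_single_index]
  · simp [Finsupp.mapDomain]
  · simp [Finsupp.sum]

lemma cm_add_left (f g h : V F) : cm (f + g) h = cm f h + cm g h := by
  rw [cm, cm, cm, Finsupp.sum_add_index']
  · intro u; simp [Finsupp.sum]
  · intro u c1 c2; rw [← Finsupp.sum_add]; congr 1; funext v cv; rw [add_mul, Finsupp.single_add]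

lemma cm_mapDomain (u : Wd) (R E : V F) :
    cm (Finsupp.mapDomain (fun w => u ++ w) R) E
      = Finsupp.mapDomain (fun w => u ++ w) (cm R E) := by
  rw [cm, cm, Finsupp.sum_mapDomain_index]
  · rw [Finsupp.mapDomain_sum]
    congr 1; funext w c
    rw [Finsupp.mapDomain_sum]
    congr 1; funext v cv
    show Finsupp.single (u ++ w ++ v) (c * cv) = Finsupp.mapDomain _ (Finsupp.single (w ++ v) (c * cv))
    rw [Finsupp.mapDomain_single, List.append_assoc]
  · intro w; simp [Finsupp.sum]
  · intro w c1 c2; rw [← Finsupp.sum_add]; congr 1; funext v cv; rw [add_mul, Finsupp.single_add]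

lemma gw_succ (k : ℕ) : gw (k + 1) = true :: altX k := by rw [gw, altX_eq]

lemma gtw_succ (k : ℕ) : gtw (k + 1) = false :: altY k := by rw [gtw, altY_eq]

lemma E1 (k m : ℕ) : sh q (gw (k+1)) (gtw (m+1)) =
    lmul true (sh q (altX k) (gtw (m+1))) + lmul false (sh q (gw (k+1)) (altY m)) := by
  conv_lhs => rw [gw_succ, gtw_succ, sh_cons_cons]
  rw [← gw_succ, ← gtw_succ]
  rw [wsum_gw, zpow_zero, one_smul]

lemma E2 (k m : ℕ) : sh q (altX k) (altY m) =
    lmul false (sh q (gw k) (altY m)) + q ^ (-2 : ℤ) • lmul true (sh q (altX k) (gtw m)) := by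
  conv_lhs => rw [altX_eq, altY_eq, sh_cons_cons]
  rw [← altX_eq, ← altY_eq]
  rw [wsum_altX]
  norm_num [pr]

lemma E3 (k m : ℕ) : sh q (altX k) (gtw (m+1)) =
    lmul false (sh q (gw k) (gtw (m+1))) + q ^ (2 : ℤ) • lmul false (sh q (altX k) (altY m)) := by
  conv_lhs => rw [altX_eq, gtw_succ, sh_cons_cons]
  rw [← altX_eq, ← gtw_succ]
  rw [wsum_altX]
  norm_num [pr]

lemma E4 (k m : ℕ) : sh q (gw (k+1)) (altY m) =
    lmul true (sh q (altX k) (altY m)) + lmul true (sh q (gw (k+1)) (gtw m)) := by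
  conv_lhs => rw [gw_succ, altY_eq, sh_cons_cons]
  rw [← gw_succ, ← altY_eq]
  rw [wsum_gw, zpow_zero, one_smul]

lemma cm_single_assoc (u : Wd) (R E : V F) :
    cm (cm (Finsupp.single u (1:F)) R) E = cm (Finsupp.single u (1:F)) (cm R E) := by
  rw [cm_single_one, cm_mapDomain, cm_single_one]

lemma cm_D (g : V F) : cm (Gt F 1 + Gn F 1) g =
    lmul false (lmul true g) + lmul true (lmul false g) := by
  rw [cm_add_left]
  congr 1
  · rw [show Gt F 1 = Finsupp.single (gtw 1) (1:F) from rfl, cm_single_one,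
      show (fun w => gtw 1 ++ w) = (fun w : Wd => false :: w) ∘ (fun w => true :: w) from rfl,
      Finsupp.mapDomain_comp]; rfl
  · rw [show Gn F 1 = Finsupp.single (gw 1) (1:F) from rfl, cm_single_one,
      show (fun w => gw 1 ++ w) = (fun w : Wd => true :: w) ∘ (fun w => false :: w) from rfl,
      Finsupp.mapDomain_comp]; rfl

lemma cm_cpow_zero (E : V F) : cm (cpow (Gt F 1 + Gn F 1) 0) E = E := by
  rw [cpow, cm_single_one, show (fun w : Wd => [] ++ w) = id from rfl, Finsupp.mapDomain_id]

lemma cm_cpow_succ (m : ℕ) (E : V F) :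
    cm (cpow (Gt F 1 + Gn F 1) (m+1)) E
      = cm (Gt F 1 + Gn F 1) (cm (cpow (Gt F 1 + Gn F 1) m) E) := by
  rw [cpow, cm_add_left, cm_add_left,
    show (Gt F 1 : V F) = Finsupp.single (gtw 1) 1 from rfl,
    show (Gn F 1 : V F) = Finsupp.single (gw 1) 1 from rfl,
    cm_single_assoc, cm_single_assoc, ← cm_add_left]

variable (F) in
def shA (q : F) (n : ℕ) : V F :=
  ∑ k ∈ Finset.range (n+1), q ^ ((n:ℤ) - 2*(k:ℤ)) • sh q (gw k) (gtw (n-k))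

variable (F) in
def shB (q : F) (n : ℕ) : V F :=
  ∑ k ∈ Finset.range n, q ^ ((n:ℤ) - 1 - 2*(k:ℤ)) • sh q (altX k) (altY (n-1-k))

variable (F) in
def shU (q : F) (m : ℕ) : V F :=
  ∑ j ∈ Finset.range (m+1), q ^ ((m:ℤ) - 2*(j:ℤ)) • sh q (altX j) (gtw (m-j))

variable (F) in
def shV (q : F) (m : ℕ) : V F :=
  ∑ j ∈ Finset.range (m+1), q ^ ((m:ℤ) - 2*(j:ℤ)) • sh q (gw j) (altY (m-j))

lemma zsm (hq : q ≠ 0) (a b : ℤ) (z : V F) : q ^ a • q ^ b • z = q ^ (a + b) • z := by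
  rw [smul_smul, ← zpow_add₀ hq]

lemma S4 (hq : q ≠ 0) (m : ℕ) :
    shB F q (m+1) = lmul false (shV F q m) + q ^ (-2:ℤ) • lmul true (shU F q m) := by
  rw [shB, shU, shV, lmul_sum, lmul_sum, Finset.smul_sum, ← Finset.sum_add_distrib]
  apply Finset.sum_congr rfl
  intro k hk
  rw [Finset.mem_range] at hk
  rw [show m + 1 - 1 - k = m - k from by omega,
    show ((m+1:ℕ):ℤ) - 1 - 2*(k:ℤ) = (m:ℤ) - 2*(k:ℤ) from by push_cast; ring,
    E2, smul_add, lmul_smul, lmul_smul, zsm q hq, zsm q hq, add_comm (-2:ℤ)]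

lemma S1 (hq : q ≠ 0) (m : ℕ) :
    shU F q m = lmul false (shA F q m) + q ^ (3:ℤ) • lmul false (shB F q m) := by
  rw [shU, shA, shB, lmul_sum, lmul_sum, Finset.smul_sum]
  have hmid : ∀ j ∈ Finset.range m,
      q ^ ((m:ℤ) - 2*(j:ℤ)) • sh q (altX j) (gtw (m-j))
        = lmul false (q ^ ((m:ℤ) - 2*(j:ℤ)) • sh q (gw j) (gtw (m-j)))
          + q ^ (3:ℤ) • lmul false (q ^ ((m:ℤ) - 1 - 2*(j:ℤ)) • sh q (altX j) (altY (m-1-j))) := by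
    intro j hj
    rw [Finset.mem_range] at hj
    rw [show m - j = (m-1-j)+1 from by omega, E3, smul_add, lmul_smul, lmul_smul,
      zsm q hq, zsm q hq,
      show (m:ℤ) - 2*(j:ℤ) + 2 = 3 + ((m:ℤ) - 1 - 2*(j:ℤ)) from by ring]
  have hlast : q ^ ((m:ℤ) - 2*((m:ℕ):ℤ)) • sh q (altX m) (gtw (m-m))
      = lmul false (q ^ ((m:ℤ) - 2*((m:ℕ):ℤ)) • sh q (gw m) (gtw (m-m))) := by
    rw [Nat.sub_self, show gtw 0 = [] from rfl, sh_nil_right, sh_nil_right, lmul_smul,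
      lmul_single, ← altX_eq]
  rw [Finset.sum_range_succ, Finset.sum_range_succ, Finset.sum_congr rfl hmid,
    Finset.sum_add_distrib, hlast]
  abel

lemma S2 (hq : q ≠ 0) (m : ℕ) :
    shV F q m = lmul true (shA F q m) + q ^ (-1:ℤ) • lmul true (shB F q m) := by
  rw [shV, shA, shB, lmul_sum, lmul_sum, Finset.smul_sum]
  have hmid : ∀ i ∈ Finset.range m,
      q ^ ((m:ℤ) - 2*((i+1:ℕ):ℤ)) • sh q (gw (i+1)) (altY (m-(i+1)))
        = lmul true (q ^ ((m:ℤ) - 2*((i+1:ℕ):ℤ)) • sh q (gw (i+1)) (gtw (m-(i+1))))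
          + q ^ (-1:ℤ) • lmul true (q ^ ((m:ℤ) - 1 - 2*(i:ℤ)) • sh q (altX i) (altY (m-1-i))) := by
    intro i hi
    rw [Finset.mem_range] at hi
    rw [show m - (i+1) = m-1-i from by omega, E4, smul_add, lmul_smul, lmul_smul,
      zsm q hq,
      show (m:ℤ) - 2*((i+1:ℕ):ℤ) = -1 + ((m:ℤ) - 1 - 2*(i:ℤ)) from by push_cast; ring]
    exact add_comm _ _
  have hfirst : q ^ ((m:ℤ) - 2*((0:ℕ):ℤ)) • sh q (gw 0) (altY (m-0))
      = lmul true (q ^ ((m:ℤ) - 2*((0:ℕ):ℤ)) • sh q (gw 0) (gtw (m-0))) := by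
    rw [show gw 0 = [] from rfl, sh_nil_left, sh_nil_left, lmul_smul, lmul_single, ← altY_eq]
  rw [Finset.sum_range_succ', Finset.sum_range_succ', Finset.sum_congr rfl hmid,
    Finset.sum_add_distrib, hfirst]
  abel

lemma S3 (hq : q ≠ 0) (m : ℕ) :
    shA F q (m+1) = q ^ (-1:ℤ) • lmul true (shU F q m) + q ^ (1:ℤ) • lmul false (shV F q m) := by
  rw [shA, shU, shV, lmul_sum, lmul_sum, Finset.smul_sum, Finset.smul_sum]
  have hmid : ∀ i ∈ Finset.range m,
      q ^ (((m+1:ℕ):ℤ) - 2*((i+1:ℕ):ℤ)) • sh q (gw (i+1)) (gtw (m+1-(i+1)))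
        = q ^ (-1:ℤ) • lmul true (q ^ ((m:ℤ) - 2*(i:ℤ)) • sh q (altX i) (gtw (m-i)))
          + q ^ (1:ℤ) • lmul false
              (q ^ ((m:ℤ) - 2*((i+1:ℕ):ℤ)) • sh q (gw (i+1)) (altY (m-(i+1)))) := by
    intro i hi
    rw [Finset.mem_range] at hi
    rw [show m + 1 - (i+1) = (m-1-i)+1 from by omega, E1, smul_add, lmul_smul, lmul_smul,
      zsm q hq, zsm q hq,
      show m - i = (m-1-i)+1 from by omega,
      show m - (i+1) = m-1-i from by omega,
      show (((m+1:ℕ)):ℤ) - 2*((i+1:ℕ):ℤ) = -1 + ((m:ℤ) - 2*(i:ℤ)) from by push_cast; ring,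
      show (-1:ℤ) + ((m:ℤ) - 2*(i:ℤ)) = 1 + ((m:ℤ) - 2*((i+1:ℕ):ℤ)) from by push_cast; ring]
  have hzero : q ^ (((m+1:ℕ):ℤ) - 2*((0:ℕ):ℤ)) • sh q (gw 0) (gtw (m+1-0))
      = q ^ (1:ℤ) • lmul false (q ^ ((m:ℤ) - 2*((0:ℕ):ℤ)) • sh q (gw 0) (altY (m-0))) := by
    rw [show gw 0 = [] from rfl, sh_nil_left, sh_nil_left, lmul_smul, lmul_single, ← gtw_succ,
      zsm q hq]
    congr 1
    · congr 1; push_cast; ring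
  have hlast : q ^ (((m+1:ℕ):ℤ) - 2*(((m+1):ℕ):ℤ)) • sh q (gw (m+1)) (gtw (m+1-(m+1)))
      = q ^ (-1:ℤ) • lmul true (q ^ ((m:ℤ) - 2*((m:ℕ):ℤ)) • sh q (altX m) (gtw (m-m))) := by
    rw [Nat.sub_self, Nat.sub_self, show gtw 0 = [] from rfl, sh_nil_right, sh_nil_right,
      lmul_smul, lmul_single, ← gw_succ, zsm q hq,
      show (((m+1:ℕ)):ℤ) - 2*(((m+1):ℕ):ℤ) = -1 + ((m:ℤ) - 2*((m:ℕ):ℤ)) from by push_cast; ring]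
  rw [Finset.sum_range_succ', Finset.sum_range_succ, Finset.sum_range_succ,
    Finset.sum_range_succ', Finset.sum_congr rfl hmid, Finset.sum_add_distrib, hzero, hlast]
  abel

lemma G1 (hq : q ≠ 0) (m : ℕ) : shA F q (m+1) = q • shB F q (m+1) := by
  rw [S3 q hq, S4 q hq, smul_add, smul_smul,
    show q * q ^ (-2:ℤ) = q ^ (-1:ℤ) from by
      rw [show (-1:ℤ) = 1 + -2 from by norm_num, zpow_add₀ hq, zpow_one],
    show q • lmul false (shV F q m) = q ^ (1:ℤ) • lmul false (shV F q m) from by rw [zpow_one]]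
  exact add_comm _ _

lemma G2 (hq : q ≠ 0) (m : ℕ) :
    shA F q (m+1) = ((q + q⁻¹) ^ m) •
      cm (cpow (Gt F 1 + Gn F 1) m) (q • Gt F 1 + q⁻¹ • Gn F 1) := by
  induction m with
  | zero =>
      rw [shA, Finset.sum_range_succ, Finset.sum_range_succ, Finset.sum_range_zero,
        pow_zero, one_smul, cm_cpow_zero]
      rw [show gw 0 = [] from rfl, show gtw (1-1) = [] from rfl, sh_nil_left, sh_nil_right,
        show ((1:ℕ):ℤ) - 2*((0:ℕ):ℤ) = 1 from by norm_num,
        show ((1:ℕ):ℤ) - 2*((1:ℕ):ℤ) = -1 from by norm_num,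
        zpow_one, zpow_neg_one, Gt, Gn, zero_add]
  | succ m ih =>
      have hB : shB F q (m+1) = q ^ (-1:ℤ) • shA F q (m+1) := by
        rw [G1 q hq m, smul_smul, zpow_neg_one, inv_mul_cancel₀ hq, one_smul]
      rw [S3 q hq, S1 q hq, S2 q hq, hB, ih, pow_succ', cm_cpow_succ, cm_D]
      simp only [lmul_add, lmul_smul, smul_add, smul_smul]
      match_scalars <;> (field_simp [hq] <;> (try simp only [show ((3:ℤ)) = ((3:ℕ):ℤ) from rfl, zpow_natCast]) <;> ring)

end aux

/-- For `n ≥ 1`: `Σ_{k=0}^n q^{n−2k} G_k ⋆ G̃_{n−k}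
= q Σ_{k=0}^{n−1} q^{n−1−2k} W_{−k} ⋆ W_{n−k}
= [2]_q^{n−1} (xy+yx)^{n−1}(q·xy + q⁻¹·yx)`. -/
theorem stmt_10 {F : Type*} [Field F] (q : F) (hq : q ≠ 0)
    (hq' : ∀ n : ℕ, 0 < n → q ^ n ≠ 1) (n : ℕ) (hn : 1 ≤ n) :
    (∑ k ∈ Finset.range (n + 1),
        q ^ ((n : ℤ) - 2 * (k : ℤ)) • st q (Gn F k) (Gt F (n - k)))
      = q • (∑ k ∈ Finset.range n,
          q ^ ((n : ℤ) - 1 - 2 * (k : ℤ)) • st q (Wm F k) (Wp F (n - k - 1))) ∧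
    (∑ k ∈ Finset.range (n + 1),
        q ^ ((n : ℤ) - 2 * (k : ℤ)) • st q (Gn F k) (Gt F (n - k)))
      = ((q + q⁻¹) ^ (n - 1)) •
          cm (cpow (Gt F 1 + Gn F 1) (n - 1)) (q • Gt F 1 + q⁻¹ • Gn F 1) := by
  obtain ⟨m, rfl⟩ : ∃ m, n = m + 1 := ⟨n - 1, by omega⟩
  have hL : (∑ k ∈ Finset.range (m + 1 + 1),
      q ^ (((m + 1 : ℕ) : ℤ) - 2 * (k : ℤ)) • st q (Gn F k) (Gt F (m + 1 - k)))
        = shA F q (m + 1) := by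
    rw [shA]
    refine Finset.sum_congr rfl fun k hk => ?_
    rw [show (Gn F k : V F) = Finsupp.single (gw k) 1 from rfl,
        show (Gt F (m + 1 - k) : V F) = Finsupp.single (gtw (m + 1 - k)) 1 from rfl,
        st_single_single]
  have hR : (∑ k ∈ Finset.range (m + 1),
      q ^ (((m + 1 : ℕ) : ℤ) - 1 - 2 * (k : ℤ)) • st q (Wm F k) (Wp F (m + 1 - k - 1)))
        = shB F q (m + 1) := by
    rw [shB]
    refine Finset.sum_congr rfl fun k hk => ?_
    rw [Finset.mem_range] at hk
    rw [show m + 1 - k - 1 = m + 1 - 1 - k from by omega,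
        show (Wm F k : V F) = Finsupp.single (altX k) 1 from rfl,
        show (Wp F (m + 1 - 1 - k) : V F) = Finsupp.single (altY (m + 1 - 1 - k)) 1 from rfl,
        st_single_single]
  constructor
  · rw [hL, hR]; exact G1 q hq m
  · rw [hL]; exact G2 q hq m
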